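/- For every n ≥ 4, the cycle C_n on n vertices satisfies ι_2(C_n) ≤ ⌊(n+4)/5⌋; in particular, the set {5i − 4 : 1 ≤ i ≤ ⌊(n+4)/5⌋} is an 𝓔_2-isolating set of C_n (with vertex set {1,…,n}, cyclically adjacent). Consequently, for n ≥ 4 with n ≠ 6, ι_2(C_n) ≤ 4n/14. -/

import Mathlib

open SimpleGraph

/-- `G` contains a copy of `H` as a (not necessarily induced) subgraph. -/
def SimpleGraph.ContainsCopy {V W : Type*} (G : SimpleGraph V) (H : SimpleGraph W) : Prop :=
  ∃ f : W ↪ V, ∀ a b, H.Adj a b → G.Adj (f a) (f b)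

/-- The closed neighbourhood `N[D]` of a set `D` of vertices. -/
def SimpleGraph.closedNbhdSet {V : Type*} (G : SimpleGraph V) (D : Set V) : Set V :=
  D ∪ ⋃ v ∈ D, G.neighborSet v

/-- `D` is an `F`-isolating set of `G`: the graph `G − N[D]` obtained by deleting the closed
neighbourhood of `D` contains no subgraph isomorphic to a member of the family `F`. -/
def SimpleGraph.IsIsolatingSet {V : Type*} (G : SimpleGraph V)
    (F : Set ((n : ℕ) × SimpleGraph (Fin n))) (D : Set V) : Prop :=
  ∀ H ∈ F, ¬ (G.induce (G.closedNbhdSet D)ᶜ).ContainsCopy H.2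

/-- The `F`-isolation number of `G`: the minimum size of an `F`-isolating set. -/
noncomputable def SimpleGraph.isolationNumber {V : Type*} (G : SimpleGraph V)
    (F : Set ((n : ℕ) × SimpleGraph (Fin n))) : ℕ :=
  sInf (Set.ncard '' {D : Set V | G.IsIsolatingSet F D})

/-- The family 𝓒 of all cycles `C_m`, `m ≥ 3`. -/
def CyclesFamily : Set ((n : ℕ) × SimpleGraph (Fin n)) :=
  {H | ∃ m : ℕ, 3 ≤ m ∧ H = ⟨m, SimpleGraph.cycleGraph m⟩}

/-- The family 𝓔_k of all connected graphs with at least `k` edges. -/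
def EkFamily (k : ℕ) : Set ((n : ℕ) × SimpleGraph (Fin n)) :=
  {H | H.2.Connected ∧ k ≤ H.2.edgeSet.ncard}

/-- The set of leaves (vertices of degree 1) of `G`. -/
def SimpleGraph.leafSet {V : Type*} (G : SimpleGraph V) : Set V :=
  {v | (G.neighborSet v).ncard = 1}

/-- `ℓ(G)`, the number of leaves of `G`. -/
noncomputable def SimpleGraph.numLeaves {V : Type*} (G : SimpleGraph V) : ℕ :=
  G.leafSet.ncard

namespace IsoProof

def Dset (n : ℕ) : Set (Fin n) :=
  {v : Fin n | ∃ i : ℕ, 1 ≤ i ∧ i ≤ (n + 4) / 5 ∧ (v : ℕ) + 1 = 5 * i - 4}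

def Sset (n : ℕ) : Set (Fin n) :=
  (SimpleGraph.cycleGraph n).closedNbhdSet (Dset n)

variable {n : ℕ}

lemma sub_val_one (hn : 2 ≤ n) (u v : Fin n) :
    (u - v).val = 1 ↔ ((u : ℕ) = (v : ℕ) + 1 ∨ ((v : ℕ) = n - 1 ∧ (u : ℕ) = 0)) := by
  have hu := u.isLt
  have hv := v.isLt
  rw [Fin.sub_def]
  simp only
  rcases Nat.lt_or_ge (n - v.val + u.val) n with h | h
  · rw [Nat.mod_eq_of_lt h]; omega
  · rw [Nat.mod_eq_sub_mod h, Nat.mod_eq_of_lt (by omega)]; omega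

lemma cyc_adj (hn : 2 ≤ n) {u v : Fin n} :
    (cycleGraph n).Adj u v ↔
      (((u : ℕ) = (v : ℕ) + 1 ∨ ((v : ℕ) = n - 1 ∧ (u : ℕ) = 0)) ∨
       ((v : ℕ) = (u : ℕ) + 1 ∨ ((u : ℕ) = n - 1 ∧ (v : ℕ) = 0))) := by
  rw [cycleGraph_adj', sub_val_one hn, sub_val_one hn]

lemma cyc_adj_of (hn : 2 ≤ n) {u v : Fin n}
    (h : ((u : ℕ) = (v : ℕ) + 1 ∨ ((v : ℕ) = n - 1 ∧ (u : ℕ) = 0)) ∨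
         ((v : ℕ) = (u : ℕ) + 1 ∨ ((u : ℕ) = n - 1 ∧ (v : ℕ) = 0))) :
    (cycleGraph n).Adj u v := (cyc_adj hn).2 h

lemma mem_Dset {x : Fin n} {j : ℕ} (hj : j < (n + 4) / 5) (hx : (x : ℕ) = 5 * j) :
    x ∈ Dset n := ⟨j + 1, by omega, by omega, by omega⟩

lemma mem_S_of_D {x : Fin n} (hx : x ∈ Dset n) : x ∈ Sset n := by
  rw [Sset, SimpleGraph.closedNbhdSet]
  exact Set.mem_union_left _ hx

lemma mem_S_of_adj {x d : Fin n} (hd : d ∈ Dset n) (h : (cycleGraph n).Adj d x) :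
    x ∈ Sset n := by
  rw [Sset, SimpleGraph.closedNbhdSet]
  exact Set.mem_union_right _ (Set.mem_biUnion hd h)

lemma claimC (hn : 4 ≤ n) [NeZero n] (v : Fin n) :
    v ∈ Sset n ∨ v + 1 ∈ Sset n ∨ v - 1 ∈ Sset n := by
  have hv := v.isLt
  have hone : (1 : Fin n).val = 1 := by rw [Fin.val_one', Nat.mod_eq_of_lt (by omega)]
  have hadd : ((v + 1 : Fin n) : ℕ) = ((v : ℕ) + 1) % n := by
    rw [Fin.add_def, hone]
  have hsub : ((v - 1 : Fin n) : ℕ) = (n - 1 + (v : ℕ)) % n := by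
    rw [Fin.sub_def, hone]
  have h5 : (v : ℕ) % 5 = 0 ∨ (v : ℕ) % 5 = 1 ∨ (v : ℕ) % 5 = 2 ∨ (v : ℕ) % 5 = 3 ∨
      (v : ℕ) % 5 = 4 := by omega
  rcases h5 with h | h | h | h | h
  · -- v itself is in D
    exact Or.inl (mem_S_of_D (mem_Dset (j := (v : ℕ) / 5) (by omega) (by omega)))
  · -- v is adjacent to d = 5*(v/5)
    refine Or.inl (mem_S_of_adj (d := ⟨5 * ((v : ℕ) / 5), by omega⟩)
      (mem_Dset (by omega) rfl) (cyc_adj_of (by omega) ?_))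
    right; left; simp; omega
  · -- v - 1 is adjacent to d = 5*(v/5)
    have hm : ((v - 1 : Fin n) : ℕ) = (v : ℕ) - 1 := by
      rw [hsub, Nat.mod_eq_sub_mod (by omega), Nat.mod_eq_of_lt (by omega)]; omega
    refine Or.inr (Or.inr (mem_S_of_adj (d := ⟨5 * ((v : ℕ) / 5), by omega⟩)
      (mem_Dset (by omega) rfl) (cyc_adj_of (by omega) ?_)))
    right; left; simp [hm]; omega
  · -- r = 3
    rcases Nat.lt_or_ge ((v : ℕ) + 2) n with hb | hb
    · -- v + 1 adjacent to d = v + 2 = 5*(v/5+1)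
      have hm : ((v + 1 : Fin n) : ℕ) = (v : ℕ) + 1 := by
        rw [hadd, Nat.mod_eq_of_lt (by omega)]
      refine Or.inr (Or.inl (mem_S_of_adj (d := ⟨(v : ℕ) + 2, hb⟩)
        (mem_Dset (j := (v : ℕ) / 5 + 1) (by omega) (by simp; omega))
        (cyc_adj_of (by omega) ?_)))
      left; left; simp [hm]
    · rcases Nat.lt_or_ge ((v : ℕ) + 1) n with hb1 | hb1
      · -- v + 1 has value n - 1, adjacent to 0 ∈ D
        have hm : ((v + 1 : Fin n) : ℕ) = (v : ℕ) + 1 := by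
          rw [hadd, Nat.mod_eq_of_lt (by omega)]
        refine Or.inr (Or.inl (mem_S_of_adj (d := ⟨0, by omega⟩)
          (mem_Dset (j := 0) (by omega) (by simp))
          (cyc_adj_of (by omega) ?_)))
        left; right; simp [hm]; omega
      · -- v = n - 1, v + 1 = 0 ∈ D
        have hm : ((v + 1 : Fin n) : ℕ) = 0 := by
          rw [hadd]; have h' : (v : ℕ) + 1 = n := by omega
          simp [h']
        exact Or.inr (Or.inl (mem_S_of_D (mem_Dset (j := 0) (by omega) (by omega))))
  · -- r = 4
    rcases Nat.lt_or_ge ((v : ℕ) + 1) n with hb | hb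
    · have hm : ((v + 1 : Fin n) : ℕ) = (v : ℕ) + 1 := by
        rw [hadd, Nat.mod_eq_of_lt (by omega)]
      exact Or.inr (Or.inl (mem_S_of_D (mem_Dset (j := (v : ℕ) / 5 + 1) (by omega)
        (by omega))))
    · have hm : ((v + 1 : Fin n) : ℕ) = 0 := by
        rw [hadd]; have h' : (v : ℕ) + 1 = n := by omega
        simp [h']
      exact Or.inr (Or.inl (mem_S_of_D (mem_Dset (j := 0) (by omega) (by omega))))

lemma nbr (hn : 4 ≤ n) [NeZero n] {u v : Fin n} (h : (cycleGraph n).Adj u v) :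
    u = v + 1 ∨ u = v - 1 := by
  have hone : (1 : Fin n).val = 1 := by rw [Fin.val_one', Nat.mod_eq_of_lt (by omega)]
  rw [cycleGraph_adj'] at h
  rcases h with h | h
  · left
    have h1 : u - v = 1 := Fin.ext (by rw [hone]; exact h)
    have h2 := sub_eq_iff_eq_add.mp h1
    rw [h2]; abel
  · right
    have h1 : v - u = 1 := Fin.ext (by rw [hone]; exact h)
    have h2 := sub_eq_iff_eq_add.mp h1
    rw [h2]; abel

lemma induced_P (hn : 4 ≤ n) (a b c : ↥((Sset n)ᶜ))
    (hab : ((cycleGraph n).induce ((Sset n)ᶜ)).Adj a b)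
    (hbc : ((cycleGraph n).induce ((Sset n)ᶜ)).Adj b c) : a = c := by
  haveI : NeZero n := ⟨by omega⟩
  by_contra hne
  have h1 : (cycleGraph n).Adj ↑a ↑b := hab
  have h2 : (cycleGraph n).Adj ↑b ↑c := hbc
  have ha := nbr hn h1
  have hc := nbr hn h2.symm
  have hval : (a : Fin n) ≠ (c : Fin n) := fun h => hne (Subtype.ext h)
  have hCb := claimC hn (b : Fin n)
  have hbS : (b : Fin n) ∉ Sset n := b.2
  have haS : (a : Fin n) ∉ Sset n := a.2
  have hcS : (c : Fin n) ∉ Sset n := c.2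
  rcases hCb with h | h | h
  · exact hbS h
  · rcases ha with ha' | ha' <;> rcases hc with hc' | hc'
    · exact hval (ha'.trans hc'.symm)
    · exact haS (ha' ▸ h)
    · exact hcS (hc' ▸ h)
    · exact hval (ha'.trans hc'.symm)
  · rcases ha with ha' | ha' <;> rcases hc with hc' | hc'
    · exact hval (ha'.trans hc'.symm)
    · exact hcS (hc' ▸ h)
    · exact haS (ha' ▸ h)
    · exact hval (ha'.trans hc'.symm)

lemma walk_end {V : Type*} {G : SimpleGraph V}
    (P : ∀ a b c : V, G.Adj a b → G.Adj b c → a = c)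
    {x u : V} (w : G.Walk x u) : ∀ {y : V}, G.Adj x y → u = x ∨ u = y := by
  induction w with
  | nil => intro y _; left; rfl
  | @cons x v u h p ih =>
    intro y hxy
    have hv : v = y := P v x y h.symm hxy
    subst hv
    rcases ih hxy.symm with h' | h'
    · right; exact h'
    · left; exact h'

lemma edges_subsingleton {V : Type*} {G : SimpleGraph V} (hc : G.Connected)
    (P : ∀ a b c : V, G.Adj a b → G.Adj b c → a = c) :
    ∀ e₁ ∈ G.edgeSet, ∀ e₂ ∈ G.edgeSet, e₁ = e₂ := by
  intro e₁ he₁ e₂ he₂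
  induction e₁ using Sym2.ind with | _ a b =>
  induction e₂ using Sym2.ind with | _ c d =>
  rw [mem_edgeSet] at he₁ he₂
  have hc1 : c = a ∨ c = b := walk_end P (hc.preconnected a c).some he₁
  have hd1 : d = a ∨ d = b := walk_end P (hc.preconnected a d).some he₁
  have hcd := he₂.ne
  rw [Sym2.eq_iff]
  rcases hc1 with rfl | rfl <;> rcases hd1 with rfl | rfl <;> tauto

lemma part1 (hn : 4 ≤ n) : (cycleGraph n).IsIsolatingSet (EkFamily 2) (Dset n) := by
  rintro ⟨m, H⟩ ⟨hconn, hcard⟩ ⟨f, hf⟩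
  have PH : ∀ a b c : Fin m, H.Adj a b → H.Adj b c → a = c := by
    intro a b c hab hbc
    exact f.injective (induced_P hn (f a) (f b) (f c) (hf _ _ hab) (hf _ _ hbc))
  have hsub := edges_subsingleton hconn PH
  have hfin : H.edgeSet.Finite := Set.toFinite _
  have h2 : 1 < H.edgeSet.ncard := hcard
  rw [Set.one_lt_ncard_iff hfin] at h2
  obtain ⟨e₁, e₂, he₁, he₂, hne⟩ := h2
  exact hne (hsub e₁ he₁ e₂ he₂)

lemma ncard_Dset (hn : 4 ≤ n) : (Dset n).ncard ≤ (n + 4) / 5 := by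
  classical
  have hsub : Dset n ⊆ (fun j : Fin ((n + 4) / 5) => (⟨5 * (j : ℕ), by
      have := j.2; omega⟩ : Fin n)) '' Set.univ := by
    rintro v ⟨i, h1, h2, h3⟩
    refine ⟨⟨i - 1, by omega⟩, Set.mem_univ _, ?_⟩
    apply Fin.ext
    simp
    omega
  calc (Dset n).ncard ≤ _ := Set.ncard_le_ncard hsub (Set.toFinite _)
    _ ≤ (Set.univ : Set (Fin ((n + 4) / 5))).ncard := Set.ncard_image_le (Set.toFinite _)
    _ = (n + 4) / 5 := by simp [Set.ncard_univ]

lemma part2 (hn : 4 ≤ n) :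
    (cycleGraph n).isolationNumber (EkFamily 2) ≤ (n + 4) / 5 :=
  le_trans (Nat.sInf_le ⟨Dset n, part1 hn, rfl⟩) (ncard_Dset hn)

end IsoProof

theorem stmt_12 (n : ℕ) (hn : 4 ≤ n) :
    (SimpleGraph.cycleGraph n).IsIsolatingSet (EkFamily 2)
      {v : Fin n | ∃ i : ℕ, 1 ≤ i ∧ i ≤ (n + 4) / 5 ∧ (v : ℕ) + 1 = 5 * i - 4} ∧
    (SimpleGraph.cycleGraph n).isolationNumber (EkFamily 2) ≤ (n + 4) / 5 ∧
    (n ≠ 6 →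
      ((SimpleGraph.cycleGraph n).isolationNumber (EkFamily 2) : ℚ) ≤ 4 * n / 14) := by
  refine ⟨IsoProof.part1 hn, IsoProof.part2 hn, fun h6 => ?_⟩
  have h7 : 7 * ((n + 4) / 5) ≤ 2 * n := by omega
  have h8 := IsoProof.part2 hn
  have h9 : ((SimpleGraph.cycleGraph n).isolationNumber (EkFamily 2) : ℚ) ≤
      (((n + 4) / 5 : ℕ) : ℚ) := by exact_mod_cast h8
  refine h9.trans ?_
  have h7' : ((7 * ((n + 4) / 5) : ℕ) : ℚ) ≤ ((2 * n : ℕ) : ℚ) := by exact_mod_cast h7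
  push_cast at h7'
  rw [le_div_iff₀ (by norm_num)]
  push_cast
  linarith
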